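/- Let d be even and define s'_{2t} = C(d/2, t) / C(d, 2t) for 0 ≤ t ≤ d/2. Then ∑_{t=0}^{d/2} C(d/2, t)·s'_{2t} = 2^d / C(d, d/2). -/

import Mathlib

lemma conv_aux (n : ℕ) :
    ∑ i ∈ Finset.range (n + 1),
      (Nat.centralBinom i : ℚ) * (Nat.centralBinom (n - i) : ℚ) = 4 ^ n := by
  induction n with
  | zero => simp [Nat.centralBinom]
  | succ n ih =>
    set g : ℕ → ℚ := fun t =>
      if t ≤ n then
        (2 * t * (2 * t - (2 * (n:ℚ) + 1)) * Nat.centralBinom t * Nat.centralBinom (n - t)) /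
          (((n:ℚ) + 1) * ((n : ℚ) + 1 - t))
      else -(Nat.centralBinom (n + 1)) with hgdef
    have key : ∀ t ∈ Finset.range (n + 1),
        (Nat.centralBinom t : ℚ) * Nat.centralBinom (n + 1 - t)
          - 4 * ((Nat.centralBinom t : ℚ) * Nat.centralBinom (n - t)) = g (t + 1) - g t := by
      intro t htmem
      rw [Finset.mem_range] at htmem
      have htn : t ≤ n := Nat.lt_succ_iff.mp htmem
      rcases eq_or_lt_of_le htn with heq | hlt
      · -- t = n
        subst heq
        have hg1 : g (t + 1) = -(Nat.centralBinom (t + 1) : ℚ) := by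
          rw [hgdef]; simp
        have hg0 : g t = (2 * t * (2 * t - (2 * (t:ℚ) + 1)) * Nat.centralBinom t *
            Nat.centralBinom (t - t)) / (((t:ℚ) + 1) * ((t : ℚ) + 1 - t)) := by
          rw [hgdef]; simp
        rw [hg1, hg0]
        have e1 : t - t = 0 := Nat.sub_self t
        have e2 : t + 1 - t = 1 := by omega
        rw [e1, e2]
        have h1 : ((t:ℚ)+1) * Nat.centralBinom (t+1) = 2*(2*t+1) * Nat.centralBinom t := by
          exact_mod_cast Nat.succ_mul_centralBinom_succ t
        have ht1 : ((t:ℚ)+1) ≠ 0 := by positivity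
        have hc0 : (Nat.centralBinom 0 : ℚ) = 1 := by norm_num [Nat.centralBinom]
        have hc1 : (Nat.centralBinom 1 : ℚ) = 2 := by norm_num [Nat.centralBinom]
        rw [hc0, hc1]
        have e3 : (t:ℚ) + 1 - t = 1 := by ring
        rw [e3]
        field_simp
        linarith
      · -- t < n
        obtain ⟨k, hk⟩ := Nat.exists_eq_add_of_lt hlt
        subst hk
        have e1 : t + k + 1 - t = k + 1 := by omega
        have e2 : t + k + 1 + 1 - t = k + 2 := by omega
        have e3 : t + k + 1 - (t + 1) = k := by omega
        have hg1 : g (t + 1) = (2 * ((t:ℚ)+1) * (2 * ((t:ℚ)+1) - (2 * ((t:ℚ)+k+1) + 1)) *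
            Nat.centralBinom (t+1) * Nat.centralBinom k) /
            ((((t:ℚ)+k+1) + 1) * (((t:ℚ)+k+1) + 1 - ((t:ℚ)+1))) := by
          simp only [hgdef]
          rw [if_pos (show t+1 ≤ t+k+1 by omega), e3]; push_cast; ring_nf
        have hg0 : g t = (2 * (t:ℚ) * (2 * (t:ℚ) - (2 * ((t:ℚ)+k+1) + 1)) *
            Nat.centralBinom t * Nat.centralBinom (k+1)) /
            ((((t:ℚ)+k+1) + 1) * (((t:ℚ)+k+1) + 1 - (t:ℚ))) := by
          simp only [hgdef]
          rw [if_pos (show t ≤ t+k+1 by omega), e1]; push_cast; ring_nf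
        rw [e1, e2, hg1, hg0]
        have h1 : ((t:ℚ)+1) * Nat.centralBinom (t+1) = 2*(2*t+1) * Nat.centralBinom t := by
          exact_mod_cast Nat.succ_mul_centralBinom_succ t
        have h2 : ((k:ℚ)+1) * Nat.centralBinom (k+1) = 2*(2*k+1) * Nat.centralBinom k := by
          exact_mod_cast Nat.succ_mul_centralBinom_succ k
        have h3 : ((k:ℚ)+2) * Nat.centralBinom (k+2) = 2*(2*k+3) * Nat.centralBinom (k+1) := by
          have h3' : ((k:ℚ)+1+1) * Nat.centralBinom (k+1+1)
              = 2*(2*((k:ℚ)+1)+1) * Nat.centralBinom (k+1) := by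
            exact_mod_cast Nat.succ_mul_centralBinom_succ (k+1)
          have e : k+1+1 = k+2 := rfl
          rw [e] at h3'; linarith
        have ht1 : ((t:ℚ)+1) ≠ 0 := by positivity
        have hk1 : ((k:ℚ)+1) ≠ 0 := by positivity
        have hk2 : ((k:ℚ)+2) ≠ 0 := by positivity
        have hb : (Nat.centralBinom (t+1) : ℚ) = 2*(2*t+1) * Nat.centralBinom t / ((t:ℚ)+1) := by
          field_simp; linarith
        have hv : (Nat.centralBinom (k+1) : ℚ) = 2*(2*k+1) * Nat.centralBinom k / ((k:ℚ)+1) := by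
          field_simp; linarith
        have hw : (Nat.centralBinom (k+2) : ℚ) = 2*(2*k+3) * Nat.centralBinom (k+1) / ((k:ℚ)+2) := by
          field_simp; linarith
        rw [hw, hb, hv]
        have ee1 : ((t:ℚ)+k+1) + 1 - ((t:ℚ)+1) = (k:ℚ)+1 := by ring
        have ee2 : ((t:ℚ)+k+1) + 1 - (t:ℚ) = (k:ℚ)+2 := by ring
        rw [ee1, ee2]
        field_simp
        ring
    have tele : ∑ t ∈ Finset.range (n + 1), (g (t + 1) - g t) = g (n + 1) - g 0 :=
      Finset.sum_range_sub g (n + 1)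
    have hgn1 : g (n + 1) = -(Nat.centralBinom (n + 1) : ℚ) := by rw [hgdef]; simp
    have hg0 : g 0 = 0 := by rw [hgdef]; simp
    have hsum : ∑ t ∈ Finset.range (n + 1),
        ((Nat.centralBinom t : ℚ) * Nat.centralBinom (n + 1 - t)
          - 4 * ((Nat.centralBinom t : ℚ) * Nat.centralBinom (n - t)))
        = -(Nat.centralBinom (n + 1) : ℚ) := by
      rw [Finset.sum_congr rfl key, tele, hgn1, hg0, sub_zero]
    rw [Finset.sum_range_succ]
    have en : n + 1 - (n + 1) = 0 := by omega
    rw [en]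
    have hc0 : (Nat.centralBinom 0 : ℚ) = 1 := by norm_num [Nat.centralBinom]
    rw [hc0, mul_one]
    rw [Finset.sum_sub_distrib, ← Finset.mul_sum, ih] at hsum
    have : ∑ t ∈ Finset.range (n + 1),
        (Nat.centralBinom t : ℚ) * Nat.centralBinom (n + 1 - t)
        = 4 * 4 ^ n - Nat.centralBinom (n + 1) := by linarith
    rw [this]; ring

lemma term_eq (m t : ℕ) (ht : t ≤ m) :
    (m.choose t : ℚ) * ((m.choose t : ℚ) / ((2 * m).choose (2 * t) : ℚ))
      = ((Nat.centralBinom t : ℚ) * (Nat.centralBinom (m - t) : ℚ)) / ((2 * m).choose m : ℚ) := by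
  have h1 : t ≤ m := ht
  have h2 : 2 * t ≤ 2 * m := by omega
  have h3 : m ≤ 2 * m := by omega
  have h4 : t ≤ 2 * t := by omega
  have h5 : m - t ≤ 2 * (m - t) := by omega
  rw [Nat.centralBinom, Nat.centralBinom]
  rw [Nat.cast_choose ℚ h1, Nat.cast_choose ℚ h2, Nat.cast_choose ℚ h3,
      Nat.cast_choose ℚ h4, Nat.cast_choose ℚ h5]
  have e1 : 2 * m - 2 * t = 2 * (m - t) := by omega
  have e2 : 2 * m - m = m := by omega
  have e3 : 2 * t - t = t := by omega
  have e4 : 2 * (m - t) - (m - t) = m - t := by omega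
  rw [e1, e2, e3, e4]
  have f1 : ((Nat.factorial t : ℚ)) ≠ 0 := by positivity
  have f2 : ((Nat.factorial (m-t) : ℚ)) ≠ 0 := by positivity
  have f3 : ((Nat.factorial m : ℚ)) ≠ 0 := by positivity
  have f4 : ((Nat.factorial (2*t) : ℚ)) ≠ 0 := by positivity
  have f5 : ((Nat.factorial (2*(m-t)) : ℚ)) ≠ 0 := by positivity
  have f6 : ((Nat.factorial (2*m) : ℚ)) ≠ 0 := by positivity
  field_simp

theorem stmt4 (d : ℕ) (hd : Even d) (hpos : 0 < d) :
    ∑ t ∈ Finset.range (d / 2 + 1),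
        ((d / 2).choose t : ℚ) * (((d / 2).choose t : ℚ) / (d.choose (2 * t) : ℚ)) =
      (2 : ℚ) ^ d / (d.choose (d / 2) : ℚ) := by
  obtain ⟨m, hm⟩ := hd
  have hdm : d = 2 * m := by omega
  subst hdm
  have hhalf : 2 * m / 2 = m := by omega
  rw [hhalf]
  have hterm : ∀ t ∈ Finset.range (m + 1),
      (m.choose t : ℚ) * ((m.choose t : ℚ) / ((2 * m).choose (2 * t) : ℚ))
        = ((Nat.centralBinom t : ℚ) * (Nat.centralBinom (m - t) : ℚ)) / ((2 * m).choose m : ℚ) := by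
    intro t htmem
    exact term_eq m t (Nat.lt_succ_iff.mp (Finset.mem_range.mp htmem))
  rw [Finset.sum_congr rfl hterm, ← Finset.sum_div, conv_aux]
  have : (2 : ℚ) ^ (2 * m) = 4 ^ m := by
    rw [pow_mul]; norm_num
  rw [this]
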